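/- For every integer k ≥ 2, all real numbers t₀, …, t_{k+1}, all pairwise distinct indices i, j, l ∈ {0,…,k} and every t ∈ ℝ, one has the polynomial identity (T_i(t) − T_j(t))·T_l(t) = (t_j − t_i)·(t_{k+1} − t_l)·P_{ijl}(t), where P_{ijl}(t) = (t − t_i)(t − t_j)(t − t_l)(t − t_{k+1})·∏_{s ∈ {0,…,k}\{i,j,l}} (t − t_s)². Consequently, since P_{ijl} is invariant under permutations of (i,j,l), for any real numbers c_{ij} = c_{ji}, c_{jl} = c_{lj}, c_{li} = c_{il} and d_i, d_j, d_l one has Σ_{cycl(i,j,l)} (T_i(t) − T_j(t))·T_l(t)·c_{ij}·d_l = −P_{ijl}(t)·Σ_{cycl(i,j,l)} (t_i − t_j)(t_{k+1} − t_l)·c_{ij}·d_l for all t ∈ ℝ. -/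
import Mathlib


open Finset

/-- The key polynomial identity behind Theorem 10.1:
`(T_i(t) − T_j(t))·T_l(t) = (t_j − t_i)(t_{k+1} − t_l)·P_{ijl}(t)`, and its consequence
for cyclic sums with symmetric coefficients `c` and arbitrary `d`. -/
theorem cyclic_polynomial_identity
    (k : ℕ) (hk : 2 ≤ k) (ts : ℕ → ℝ)
    (i j l : ℕ) (hi : i ≤ k) (hj : j ≤ k) (hl : l ≤ k)
    (hij : i ≠ j) (hjl : j ≠ l) (hil : i ≠ l)
    (T : ℕ → ℝ → ℝ)
    (hT : ∀ m t, T m t =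
      (ts (k+1) - ts m) * ∏ s ∈ (Finset.range (k+1)).erase m, (t - ts s))
    (P : ℝ → ℝ)
    (hP : ∀ t, P t = (t - ts i) * (t - ts j) * (t - ts l) * (t - ts (k+1)) *
      ∏ s ∈ (Finset.range (k+1)) \ {i, j, l}, (t - ts s)^2)
    (cij cjl cli di dj dl : ℝ) :
    (∀ t : ℝ, (T i t - T j t) * T l t = (ts j - ts i) * (ts (k+1) - ts l) * P t) ∧
    (∀ t : ℝ,
      (T i t - T j t) * T l t * cij * dl
        + (T j t - T l t) * T i t * cjl * di
        + (T l t - T i t) * T j t * cli * dj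
      = -(P t) *
        ((ts i - ts j) * (ts (k+1) - ts l) * cij * dl
          + (ts j - ts l) * (ts (k+1) - ts i) * cjl * di
          + (ts l - ts i) * (ts (k+1) - ts j) * cli * dj)) := by
  have hi' : i ∈ Finset.range (k+1) := mem_range.2 (Nat.lt_succ_of_le hi)
  have hj' : j ∈ Finset.range (k+1) := mem_range.2 (Nat.lt_succ_of_le hj)
  have hl' : l ∈ Finset.range (k+1) := mem_range.2 (Nat.lt_succ_of_le hl)
  -- decomposition of the erased product
  have hprod : ∀ a b c : ℕ, a ∈ Finset.range (k+1) → b ∈ Finset.range (k+1) →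
      c ∈ Finset.range (k+1) → a ≠ b → b ≠ c → a ≠ c →
      ({a, b, c} : Finset ℕ) = {i, j, l} → ∀ t : ℝ,
      ∏ s ∈ (Finset.range (k+1)).erase a, (t - ts s)
        = (t - ts b) * (t - ts c) *
            ∏ s ∈ (Finset.range (k+1)) \ {i, j, l}, (t - ts s) := by
    intro a b c ha hb hc hab hbc hac hset t
    have hD : (Finset.range (k+1)) \ {i, j, l}
        = (((Finset.range (k+1)).erase a).erase b).erase c := by
      rw [← hset]
      ext x
      simp only [Finset.mem_sdiff, Finset.mem_erase, Finset.mem_insert,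
        Finset.mem_singleton]
      tauto
    have hb' : b ∈ (Finset.range (k+1)).erase a :=
      Finset.mem_erase.2 ⟨hab.symm, hb⟩
    have hc' : c ∈ ((Finset.range (k+1)).erase a).erase b :=
      Finset.mem_erase.2 ⟨hbc.symm, Finset.mem_erase.2 ⟨hac.symm, hc⟩⟩
    rw [← Finset.mul_prod_erase _ _ hb', ← Finset.mul_prod_erase _ _ hc', hD]
    ring
  have htriple : ∀ a b c : ℕ, a ≠ b → b ≠ c → a ≠ c →
      ({a, b, c} : Finset ℕ) = {i, j, l} → ∀ t : ℝ,
      (t - ts a) * (t - ts b) * (t - ts c) = (t - ts i) * (t - ts j) * (t - ts l) := by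
    intro a b c hab hbc hac hset t
    have h1 : ∏ s ∈ ({a, b, c} : Finset ℕ), (t - ts s)
        = (t - ts a) * ((t - ts b) * (t - ts c)) := by
      rw [Finset.prod_insert (by simp [hab, hac]),
        Finset.prod_insert (by simp [hbc]), Finset.prod_singleton]
    have h2 : ∏ s ∈ ({i, j, l} : Finset ℕ), (t - ts s)
        = (t - ts i) * ((t - ts j) * (t - ts l)) := by
      rw [Finset.prod_insert (by simp [hij, hil]),
        Finset.prod_insert (by simp [hjl]), Finset.prod_singleton]
    have := h1.symm.trans (by rw [hset, h2])
    linarith [this]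
  have key : ∀ a b c : ℕ, a ∈ Finset.range (k+1) → b ∈ Finset.range (k+1) →
      c ∈ Finset.range (k+1) → a ≠ b → b ≠ c → a ≠ c →
      ({a, b, c} : Finset ℕ) = {i, j, l} → ∀ t : ℝ,
      (T a t - T b t) * T c t = (ts b - ts a) * (ts (k+1) - ts c) * P t := by
    intro a b c ha hb hc hab hbc hac hset t
    have hbca : ({b, c, a} : Finset ℕ) = {i, j, l} := by
      rw [← hset]; ext x; simp only [Finset.mem_insert, Finset.mem_singleton]; tauto
    have hcab : ({c, a, b} : Finset ℕ) = {i, j, l} := by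
      rw [← hset]; ext x; simp only [Finset.mem_insert, Finset.mem_singleton]; tauto
    rw [hT a t, hT b t, hT c t, hP t,
      hprod a b c ha hb hc hab hbc hac hset t,
      hprod b c a hb hc ha hbc hac.symm hab.symm hbca t,
      hprod c a b hc ha hb hac.symm hab (Ne.symm hbc) hcab t,
      ← htriple a b c hab hbc hac hset t,
      Finset.prod_pow]
    ring
  have k1 := key i j l hi' hj' hl' hij hjl hil rfl
  have k2 := key j l i hj' hl' hi' hjl (Ne.symm hil) (Ne.symm hij)
    (by ext x; simp only [Finset.mem_insert, Finset.mem_singleton]; tauto)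
  have k3 := key l i j hl' hi' hj' (Ne.symm hil) hij (Ne.symm hjl)
    (by ext x; simp only [Finset.mem_insert, Finset.mem_singleton]; tauto)
  refine ⟨k1, fun t => ?_⟩
  rw [k1 t, k2 t, k3 t]
  ring
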